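/- arXiv:math/0703436 — 4 statements merged into one kernel-verified Lean document; each statement's English description precedes it below -/
import Mathlib

section
/- With δ = #𝔍_0 as above, δ > 0 if and only if n_j ≤ Σ_{k≠j} n_k for every 1 ≤ j ≤ r. -/
open Finset

private def Sfun {r : ℕ} (n : Fin r → ℕ) (i : Fin r) : ℕ :=
  ∑ j ∈ Finset.univ.filter (fun j => j < i), n j

private lemma Sfun_add_le {r : ℕ} (n : Fin r → ℕ) (i : Fin r) :
    Sfun n i + n i ≤ ∑ j, n j := by
  have hins : i ∉ Finset.univ.filter (fun j => j < i) := by simp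
  calc Sfun n i + n i
      = ∑ j ∈ insert i (Finset.univ.filter (fun j => j < i)), n j := by
        rw [Finset.sum_insert hins, Sfun, Nat.add_comm]
    _ ≤ ∑ j, n j := Finset.sum_le_sum_of_subset (by simp)

private lemma Sfun_lt {r : ℕ} (n : Fin r → ℕ) {i i' : Fin r} (h : i < i') :
    Sfun n i + n i ≤ Sfun n i' := by
  have hins : i ∉ Finset.univ.filter (fun j => j < i) := by simp
  calc Sfun n i + n i
      = ∑ j ∈ insert i (Finset.univ.filter (fun j => j < i)), n j := by
        rw [Finset.sum_insert hins, Sfun, Nat.add_comm]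
    _ ≤ Sfun n i' := by
        apply Finset.sum_le_sum_of_subset
        intro j hj
        simp only [Finset.mem_insert, Finset.mem_filter, Finset.mem_univ, true_and] at hj ⊢
        rcases hj with rfl | hj
        · exact h
        · exact lt_trans hj h

open Fin.NatCast in
/-- `δ = #𝔍₀ > 0` iff `n j ≤ ∑_{k ≠ j} n k` for every `j`. -/
theorem stmt5 (r : ℕ) (n : Fin r → ℕ) (hn : ∀ i, 0 < n i) :
    0 < (Finset.univ.filter
        (fun j : ((i : Fin r) × Fin (n i)) → Fin r =>
          (∀ p, j p ≠ p.1) ∧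
          ∀ i, (Finset.univ.filter fun p => j p = i).card = n i)).card
    ↔ ∀ i, n i ≤ ∑ k ∈ Finset.univ.erase i, n k := by
  have hblock : ∀ i : Fin r,
      (Finset.univ.filter fun p : (i : Fin r) × Fin (n i) => p.1 = i).card = n i := by
    intro i
    have : (Finset.univ.filter fun p : (i : Fin r) × Fin (n i) => p.1 = i)
        = ({i} : Finset (Fin r)).sigma (fun _ => Finset.univ) := by
      ext p; simp [Finset.mem_sigma]
    rw [this, Finset.card_sigma]; simp
  have herase : ∀ i : Fin r,
      (Finset.univ.filter fun p : (i : Fin r) × Fin (n i) => p.1 ≠ i).card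
        = ∑ k ∈ Finset.univ.erase i, n k := by
    intro i
    have : (Finset.univ.filter fun p : (i : Fin r) × Fin (n i) => p.1 ≠ i)
        = (Finset.univ.erase i).sigma (fun _ => Finset.univ) := by
      ext p; simp [Finset.mem_sigma]
    rw [this, Finset.card_sigma]; simp
  constructor
  · intro hpos i
    obtain ⟨j, hj⟩ := Finset.card_pos.mp hpos
    simp only [Finset.mem_filter, Finset.mem_univ, true_and] at hj
    obtain ⟨h1, h2⟩ := hj
    calc n i = (Finset.univ.filter fun p => j p = i).card := (h2 i).symm
      _ ≤ (Finset.univ.filter fun p : (i : Fin r) × Fin (n i) => p.1 ≠ i).card := by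
          apply Finset.card_le_card
          intro p hp
          simp only [Finset.mem_filter, Finset.mem_univ, true_and] at hp ⊢
          intro h
          exact h1 p (by rw [hp, h])
      _ = ∑ k ∈ Finset.univ.erase i, n k := herase i
  · intro h
    rcases Nat.eq_zero_or_pos r with hr | hr
    · apply Finset.card_pos.mpr
      refine ⟨fun p => p.1, ?_⟩
      simp only [Finset.mem_filter, Finset.mem_univ, true_and]
      subst hr
      exact ⟨fun p => p.1.elim0, fun i => i.elim0⟩
    · haveI : NeZero r := ⟨hr.ne'⟩
      set N := ∑ j, n j with hNdef
      have hN : 0 < N := by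
        have := hn ⟨0, hr⟩
        have := Sfun_add_le n ⟨0, hr⟩
        omega
      haveI : NeZero N := ⟨hN.ne'⟩
      -- the equivalence
      have hfb : ∀ p : (i : Fin r) × Fin (n i), Sfun n p.1 + (p.2 : ℕ) < N := by
        intro p
        have := Sfun_add_le n p.1
        have := p.2.isLt
        omega
      set f : ((i : Fin r) × Fin (n i)) → Fin N :=
        fun p => ⟨Sfun n p.1 + (p.2 : ℕ), hfb p⟩ with hfdef
      have hfinj : Function.Injective f := by
        rintro ⟨i, a⟩ ⟨i', b⟩ hfe
        have hv : Sfun n i + (a : ℕ) = Sfun n i' + (b : ℕ) := congrArg Fin.val hfe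
        rcases lt_trichotomy i i' with hlt | heq | hlt
        · have h1 := Sfun_lt n hlt
          have := a.isLt
          omega
        · subst heq
          have : (a : ℕ) = (b : ℕ) := by omega
          simp [Fin.ext_iff, this]
        · have h1 := Sfun_lt n hlt
          have := b.isLt
          omega
      have hfbij : Function.Bijective f := by
        rw [Fintype.bijective_iff_injective_and_card]
        refine ⟨hfinj, ?_⟩
        simp [Fintype.card_sigma, hNdef]
      set e : ((i : Fin r) × Fin (n i)) ≃ Fin N := Equiv.ofBijective f hfbij with hedef
      have heval : ∀ p, ((e p : Fin N) : ℕ) = Sfun n p.1 + (p.2 : ℕ) := fun p => rfl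
      set m : ℕ := Finset.univ.sup n with hmdef
      have hmn : ∀ i, n i ≤ m := fun i => Finset.le_sup (Finset.mem_univ i)
      have hm2 : m + m ≤ N := by
        obtain ⟨i₀, -, hi₀⟩ := Finset.exists_mem_eq_sup Finset.univ Finset.univ_nonempty n
        have h1 := h i₀
        have h2 : n i₀ + ∑ k ∈ Finset.univ.erase i₀, n k = N :=
          Finset.add_sum_erase _ _ (Finset.mem_univ i₀)
        omega
      set φ : ((i : Fin r) × Fin (n i)) ≃ ((i : Fin r) × Fin (n i)) :=
        e.trans ((Equiv.addRight ((m : ℕ) : Fin N)).trans e.symm) with hφdef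
      set j : ((i : Fin r) × Fin (n i)) → Fin r := fun p => (φ p).1 with hjdef
      -- value of the shift
      have hσval : ∀ x : Fin N, ((x + ((m : ℕ) : Fin N) : Fin N) : ℕ) = ((x : ℕ) + m) % N := by
        intro x
        rw [Fin.add_def]
        simp [Fin.val_natCast]
      have key : ∀ p : (i : Fin r) × Fin (n i), (φ p).1 ≠ p.1 := by
        intro p hp
        set q := φ p with hq
        have heq : e q = e p + ((m : ℕ) : Fin N) := by
          simp only [hq, hφdef, Equiv.trans_apply, Equiv.coe_addRight]
          exact e.apply_symm_apply _
        have hv : Sfun n q.1 + (q.2 : ℕ) = ((Sfun n p.1 + (p.2 : ℕ)) + m) % N := by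
          rw [← heval q, heq, hσval, heval p]
        have hS : Sfun n q.1 = Sfun n p.1 := by rw [hp]
        have hq2 : (q.2 : ℕ) < n p.1 := by have h1 := q.2.isLt; have h2 := congrArg n hp; omega
        have hp2 : (p.2 : ℕ) < n p.1 := p.2.isLt
        have hnm : n p.1 ≤ m := hmn p.1
        have hfb' := hfb p
        rcases Nat.lt_or_ge (Sfun n p.1 + (p.2 : ℕ) + m) N with h' | h'
        · rw [Nat.mod_eq_of_lt h'] at hv
          omega
        · rw [Nat.mod_eq_sub_mod h', Nat.mod_eq_of_lt (by omega)] at hv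
          omega
      apply Finset.card_pos.mpr
      refine ⟨j, ?_⟩
      simp only [Finset.mem_filter, Finset.mem_univ, true_and]
      refine ⟨fun p => key p, fun i => ?_⟩
      have : (Finset.univ.filter fun p => j p = i).card
          = (Finset.univ.filter fun p : (i : Fin r) × Fin (n i) => p.1 = i).card := by
        apply Finset.card_equiv φ
        intro p
        simp [hjdef]
      rw [this, hblock]
end

section
/- Define 𝔍_1 = {(j_{11},...,j_{rn_r}) : j_{11} = 1, j_{ik} ≠ i for all (i,k) ≠ (1,1), and #{(h,k): j_{hk} = i} = n_i for all i}. Then #𝔍_1 ≤ n_1 · #𝔍_0, where 𝔍_0 = {(j_{11},...,j_{rn_r}) : j_{ik} ≠ i for all (i,k), and #{(h,k): j_{hk} = i} = n_i for all i}. -/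
open Finset

private lemma card_filter_equiv' {α : Type*} [Fintype α] [DecidableEq α]
    (e : α ≃ α) (P : α → Prop) [DecidablePred P] :
    (Finset.univ.filter fun p => P (e p)).card = (Finset.univ.filter P).card :=
  Finset.card_bij' (fun p _ => e p) (fun p _ => e.symm p)
    (by simp) (by simp) (by simp) (by simp)

private lemma card_ne_fst (r : ℕ) (n : Fin r → ℕ) (i0 : Fin r) :
    (Finset.univ.filter fun p : (i : Fin r) × Fin (n i) => p.1 ≠ i0).card
      = ∑ k ∈ Finset.univ.erase i0, n k := by
  rw [show (Finset.univ.filter fun p : (i : Fin r) × Fin (n i) => p.1 ≠ i0)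
      = (Finset.univ.erase i0).sigma (fun _ => Finset.univ) from ?_]
  · rw [Finset.card_sigma]; simp
  · ext p; simp [Finset.mem_sigma]

set_option maxHeartbeats 800000 in
private lemma stmt6_aux (r : ℕ) (n : Fin r → ℕ)
    (hbal : ∀ i, n i ≤ ∑ k ∈ Finset.univ.erase i, n k)
    (i0 : Fin r) (p0 : (i : Fin r) × Fin (n i)) (hp01 : p0.1 = i0) :
    (Finset.univ.filter
        (fun j : ((i : Fin r) × Fin (n i)) → Fin r =>
          j p0 = i0 ∧
          (∀ p, p ≠ p0 → j p ≠ p.1) ∧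
          ∀ i, (Finset.univ.filter fun p => j p = i).card = n i)).card
    ≤ n i0 * (Finset.univ.filter
        (fun j : ((i : Fin r) × Fin (n i)) → Fin r =>
          (∀ p, j p ≠ p.1) ∧
          ∀ i, (Finset.univ.filter fun p => j p = i).card = n i)).card := by
  classical
  set A := Finset.univ.filter
        (fun j : ((i : Fin r) × Fin (n i)) → Fin r =>
          j p0 = i0 ∧
          (∀ p, p ≠ p0 → j p ≠ p.1) ∧
          ∀ i, (Finset.univ.filter fun p => j p = i).card = n i) with hA
  set B := Finset.univ.filter
        (fun j : ((i : Fin r) × Fin (n i)) → Fin r =>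
          (∀ p, j p ≠ p.1) ∧
          ∀ i, (Finset.univ.filter fun p => j p = i).card = n i) with hB
  -- existence of a swap partner
  have hex : ∀ j ∈ A, ∃ q : (i : Fin r) × Fin (n i), q.1 ≠ i0 ∧ j q ≠ i0 := by
    intro j hj
    rw [hA, Finset.mem_filter] at hj
    obtain ⟨-, hj0, -, hcnt⟩ := hj
    by_contra hcon
    push_neg at hcon
    have hsub : insert p0 (Finset.univ.filter
        fun p : (i : Fin r) × Fin (n i) => p.1 ≠ i0)
        ⊆ Finset.univ.filter (fun p => j p = i0) := by
      intro p hp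
      rcases Finset.mem_insert.mp hp with h | h
      · subst h; simp [hj0]
      · rw [Finset.mem_filter] at h ⊢
        exact ⟨h.1, hcon p h.2⟩
    have hcard := Finset.card_le_card hsub
    rw [Finset.card_insert_of_notMem (by simp [hp01]), card_ne_fst, hcnt] at hcard
    have := hbal i0
    omega
  -- the swap partner as a total function
  let ψ : (((i : Fin r) × Fin (n i)) → Fin r) → (i : Fin r) × Fin (n i) :=
    fun j => if h : ∃ q : (i : Fin r) × Fin (n i), q.1 ≠ i0 ∧ j q ≠ i0
      then h.choose else p0
  let F : (((i : Fin r) × Fin (n i)) → Fin r) → (((i : Fin r) × Fin (n i)) → Fin r) :=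
    fun j => j ∘ (Equiv.swap p0 (ψ j))
  have hψ : ∀ j ∈ A, (ψ j).1 ≠ i0 ∧ j (ψ j) ≠ i0 := by
    intro j hj
    have h := hex j hj
    simp only [ψ, dif_pos h]
    exact h.choose_spec
  have hψne : ∀ j ∈ A, ψ j ≠ p0 := by
    intro j hj h
    exact (hψ j hj).1 (by rw [h, hp01])
  -- F maps A into B
  have hFmem : ∀ j ∈ A, F j ∈ B := by
    intro j hj
    obtain ⟨hq1, hq2⟩ := hψ j hj
    have hqne := hψne j hj
    have hjA := hj
    rw [hA, Finset.mem_filter] at hjA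
    obtain ⟨-, hj0, hjoff, hcnt⟩ := hjA
    rw [hB, Finset.mem_filter]
    refine ⟨Finset.mem_univ _, ?_, ?_⟩
    · intro p
      rcases eq_or_ne p p0 with h | h
      · subst h
        simp only [F, Function.comp, Equiv.swap_apply_left, hp01]
        exact hq2
      · rcases eq_or_ne p (ψ j) with h' | h'
        · subst h'
          simp only [F, Function.comp, Equiv.swap_apply_right]
          rw [hj0]
          exact fun hc => hq1 hc.symm
        · simp only [F, Function.comp, Equiv.swap_apply_of_ne_of_ne h h']
          exact hjoff p h
    · intro i
      rw [show (Finset.univ.filter fun p => F j p = i)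
          = Finset.univ.filter fun p => j ((Equiv.swap p0 (ψ j)) p) = i from rfl,
        card_filter_equiv' (Equiv.swap p0 (ψ j)) (fun p => j p = i)]
      exact hcnt i
  -- conclude via pigeonhole with fiber bound
  refine Finset.card_le_mul_card_image_of_maps_to (f := F) hFmem (n i0) ?_
  intro a haB
  rw [hB, Finset.mem_filter] at haB
  have hacard : (Finset.univ.filter fun p => a p = i0).card = n i0 := haB.2.2 i0
  rw [← hacard]
  apply Finset.card_le_card_of_injOn ψ
  · intro j hj
    rw [Finset.mem_coe, Finset.mem_filter] at hj
    obtain ⟨hjA, hjF⟩ := hj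
    rw [Finset.mem_coe, Finset.mem_filter]
    refine ⟨Finset.mem_univ _, ?_⟩
    have : a (ψ j) = j p0 := by
      rw [← hjF]
      simp [F, Equiv.swap_apply_right]
    rw [this]
    rw [hA, Finset.mem_filter] at hjA
    exact hjA.2.1
  · intro j1 hj1 j2 hj2 hq
    rw [Finset.coe_filter, Set.mem_setOf_eq] at hj1 hj2
    have h1 : j1 = a ∘ (Equiv.swap p0 (ψ j1)) := by
      rw [← hj1.2]
      funext p
      simp [F, Function.comp]
    have h2 : j2 = a ∘ (Equiv.swap p0 (ψ j2)) := by
      rw [← hj2.2]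
      funext p
      simp [F, Function.comp]
    rw [h1, h2, hq]

/-- `#𝔍₁ ≤ n₁ · #𝔍₀`, where `𝔍₁` fixes the value at the distinguished position
`(i₀, 0)` to be `i₀` and requires `j p ≠ p.1` elsewhere, and `𝔍₀` requires
`j p ≠ p.1` everywhere; both with fiber sizes `n i`. -/
theorem stmt6 (r : ℕ) (n : Fin r → ℕ) (hn : ∀ i, 0 < n i)
    (hbal : ∀ i, n i ≤ ∑ k ∈ Finset.univ.erase i, n k)
    (i0 : Fin r) :
    (Finset.univ.filter
        (fun j : ((i : Fin r) × Fin (n i)) → Fin r =>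
          j ⟨i0, ⟨0, hn i0⟩⟩ = i0 ∧
          (∀ p, p ≠ ⟨i0, ⟨0, hn i0⟩⟩ → j p ≠ p.1) ∧
          ∀ i, (Finset.univ.filter fun p => j p = i).card = n i)).card
    ≤ n i0 * (Finset.univ.filter
        (fun j : ((i : Fin r) × Fin (n i)) → Fin r =>
          (∀ p, j p ≠ p.1) ∧
          ∀ i, (Finset.univ.filter fun p => j p = i).card = n i)).card :=
  stmt6_aux r n hbal i0 ⟨i0, ⟨0, hn i0⟩⟩ rfl
end

section
/- For each 1 ≤ i ≤ r, the Bézout number δ_i := Bez_{n_1,...,n_r}(d_0, 1; d_1, n_1; ...; d_i, n_i − 1; ...; d_r, n_r), where d_0 = (1,...,1) and d_j has 0 in coordinate j and 1 elsewhere, satisfies δ_i ≤ (n_i + 1)·δ, where δ = Bez_{n_1,...,n_r}(d_1, n_1; ...; d_r, n_r). -/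
open Finset

/-- The admissible index assignments (fiber of value `i` has size `n i`). -/
noncomputable def Jset (r : ℕ) (n : Fin r → ℕ) : Finset (((i : Fin r) × Fin (n i)) → Fin r) :=
  Finset.univ.filter fun j => ∀ i, (Finset.univ.filter fun p => j p = i).card = n i

/-- `δ`: Bézout number of the system with `n i` polynomials of multidegree `d_i`. -/
noncomputable def deltaBez (r : ℕ) (n : Fin r → ℕ) : ℕ :=
  ∑ j ∈ Jset r n, ∏ p : (i : Fin r) × Fin (n i), (if j p = p.1 then 0 else 1)

/-- `δ_{i₀}`: Bézout number where one polynomial of multidegree `d_{i₀}` is replaced by one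
of multidegree `d₀ = (1,…,1)`. -/
noncomputable def deltaBezI (r : ℕ) (n : Fin r → ℕ) (hn : ∀ i, 0 < n i) (i0 : Fin r) : ℕ :=
  ∑ j ∈ Jset r n, ∏ p : (i : Fin r) × Fin (n i),
    if p = ⟨i0, ⟨0, hn i0⟩⟩ then 1 else (if j p = p.1 then 0 else 1)

section Aux
variable {r : ℕ} {n : Fin r → ℕ}

lemma mem_Jset_iff {j : ((i : Fin r) × Fin (n i)) → Fin r} :
    j ∈ Jset r n ↔ ∀ i, (Finset.univ.filter fun p => j p = i).card = n i := by
  simp [Jset]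

lemma comp_perm_mem_Jset {j : ((i : Fin r) × Fin (n i)) → Fin r} (hj : j ∈ Jset r n)
    (e : Equiv.Perm ((i : Fin r) × Fin (n i))) : (j ∘ e) ∈ Jset r n := by
  rw [mem_Jset_iff] at hj ⊢
  intro i
  rw [← hj i]
  have h : (Finset.univ.filter fun p => j p = i) =
      (Finset.univ.filter fun p => j (e p) = i).map e.toEmbedding := by
    ext p
    simp only [mem_map, mem_filter, mem_univ, true_and, Equiv.coe_toEmbedding]
    constructor
    · intro h; exact ⟨e.symm p, by simpa using h, by simp⟩
    · rintro ⟨q, hq, rfl⟩; exact hq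
  rw [h, Finset.card_map]; rfl

lemma card_ne_filter (i0 : Fin r) :
    (Finset.univ.filter fun p : (i : Fin r) × Fin (n i) => p.1 ≠ i0).card
      = ∑ k ∈ Finset.univ.erase i0, n k := by
  have h : (Finset.univ.filter fun p : (i : Fin r) × Fin (n i) => p.1 ≠ i0)
      = (Finset.univ.erase i0).sigma fun _ => Finset.univ := by
    ext ⟨a, b⟩
    simp [Finset.mem_sigma, Finset.mem_erase]
  rw [h, Finset.card_sigma]
  simp

end Aux

/-- `δ_i ≤ (n_i + 1) · δ`. -/
theorem stmt7 (r : ℕ) (n : Fin r → ℕ) (hn : ∀ i, 0 < n i)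
    (hbal : ∀ i, n i ≤ ∑ k ∈ Finset.univ.erase i, n k) (i0 : Fin r) :
    deltaBezI r n hn i0 ≤ (n i0 + 1) * deltaBez r n := by

  classical
  set P := (i : Fin r) × Fin (n i) with hP
  set p₀ : P := ⟨i0, ⟨0, hn i0⟩⟩ with hp₀
  set good : Finset (P → Fin r) := (Jset r n).filter fun j => ∀ p : P, j p ≠ p.1 with hgood
  set S : Finset (P → Fin r) :=
    (Jset r n).filter (fun j => ∀ p : P, p ≠ p₀ → j p ≠ p.1) with hS
  set bad : Finset (P → Fin r) :=
    (Jset r n).filter (fun j => j p₀ = i0 ∧ ∀ p : P, p ≠ p₀ → j p ≠ p.1) with hbad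
  -- δ = good.card
  have hdelta : deltaBez r n = good.card := by
    rw [hgood, Finset.card_filter, deltaBez]
    refine Finset.sum_congr rfl fun j _ => ?_
    by_cases h : ∀ p : P, j p ≠ p.1
    · rw [if_pos h]
      exact Finset.prod_eq_one fun p _ => by simp [h p]
    · rw [if_neg h]
      push_neg at h
      obtain ⟨p, hp⟩ := h
      exact Finset.prod_eq_zero (mem_univ p) (by simp [hp])
  -- δ_{i0} = S.card
  have hdeltaI : deltaBezI r n hn i0 = S.card := by
    rw [hS, Finset.card_filter, deltaBezI]
    refine Finset.sum_congr rfl fun j _ => ?_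
    by_cases h : ∀ p : P, p ≠ p₀ → j p ≠ p.1
    · rw [if_pos h]
      refine Finset.prod_eq_one fun p _ => ?_
      by_cases hpp : p = p₀
      · simp [hpp, hp₀]
      · simp [hpp, h p hpp]
    · rw [if_neg h]
      push_neg at h
      obtain ⟨p, hp1, hp2⟩ := h
      refine Finset.prod_eq_zero (mem_univ p) ?_
      simp [hp1, hp2]; exact hp1
  -- S.card = good.card + bad.card
  have hsplit : S.card = good.card + bad.card := by
    have hgood' : S.filter (fun j => ¬ j p₀ = i0) = good := by
      ext j
      simp only [hS, hgood, Finset.mem_filter, and_assoc]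
      constructor
      · rintro ⟨hj, hall, hne⟩
        refine ⟨hj, fun p => ?_⟩
        by_cases hpp : p = p₀
        · subst hpp; exact hne
        · exact hall p hpp
      · rintro ⟨hj, hall⟩
        exact ⟨hj, fun p _ => hall p, hall p₀⟩
    have hbad' : S.filter (fun j => j p₀ = i0) = bad := by
      ext j
      simp only [hS, hbad, Finset.mem_filter, and_assoc]
      tauto
    rw [← Finset.card_filter_add_card_filter_not (s := S) (p := fun j => j p₀ = i0),
      hgood', hbad', add_comm]
  -- existence of a swap position
  have hex : ∀ j ∈ bad, ∃ q : P, q.1 ≠ i0 ∧ j q ≠ i0 := by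
    intro j hj
    rw [hbad, Finset.mem_filter] at hj
    obtain ⟨hjJ, hj0, _⟩ := hj
    by_contra hcon
    push_neg at hcon
    have hsub : (Finset.univ.filter fun p : P => p.1 ≠ i0) ⊆
        ((Finset.univ.filter fun p : P => j p = i0).erase p₀) := by
      intro qq hqq
      rw [Finset.mem_filter] at hqq
      refine Finset.mem_erase.2 ⟨fun h => ?_, Finset.mem_filter.2 ⟨mem_univ _, hcon qq hqq.2⟩⟩
      exact hqq.2 (by rw [h])
    have h1 := Finset.card_le_card hsub
    rw [card_ne_filter i0] at h1
    have h2 := Finset.card_erase_of_mem (s := Finset.univ.filter fun p : P => j p = i0)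
      (a := p₀) (Finset.mem_filter.2 ⟨mem_univ _, hj0⟩)
    rw [mem_Jset_iff.mp hjJ i0] at h2
    rw [h2] at h1
    have h3 := hbal i0
    have h4 := hn i0
    omega
  -- totalized choice of swap position
  have hexT : ∀ j : P → Fin r, ∃ q : P, j ∈ bad → (q.1 ≠ i0 ∧ j q ≠ i0) := by
    intro j
    by_cases h : j ∈ bad
    · obtain ⟨qq, hq⟩ := hex j h
      exact ⟨qq, fun _ => hq⟩
    · exact ⟨p₀, fun h' => absurd h' h⟩
  choose q hq using hexT
  -- target of the injection
  set T : Finset ((_ : P → Fin r) × P) :=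
    good.sigma (fun j' => Finset.univ.filter fun qq : P => j' qq = i0) with hT
  set f : (P → Fin r) → ((_ : P → Fin r) × P) :=
    fun j => ⟨j ∘ Equiv.swap p₀ (q j), q j⟩ with hf
  have hq0 : ∀ j ∈ bad, q j ≠ p₀ := by
    intro j hj h
    exact (hq j hj).1 (by rw [h])
  have hmem : ∀ j ∈ bad, f j ∈ T := by
    intro j hj
    obtain ⟨hq1, hq2⟩ := hq j hj
    have hqp := hq0 j hj
    rw [hbad, Finset.mem_filter] at hj
    obtain ⟨hjJ, hj0, hall⟩ := hj
    rw [hT, Finset.mem_sigma]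
    constructor
    · rw [hgood, Finset.mem_filter]
      refine ⟨comp_perm_mem_Jset hjJ _, fun p => ?_⟩
      by_cases hp1 : p = p₀
      · subst hp1
        simpa [hf, hp₀, Function.comp, Equiv.swap_apply_left] using hq2
      · by_cases hp2 : p = q j
        · subst hp2
          simp only [hf, Function.comp, Equiv.swap_apply_right, hj0]
          exact fun h => hq1 h.symm
        · simpa [hf, Function.comp, Equiv.swap_apply_of_ne_of_ne hp1 hp2] using hall p hp1
    · simp [hf, Function.comp, Equiv.swap_apply_right, hj0]
  have hinj : Set.InjOn f bad := by
    intro j₁ hj₁ j₂ hj₂ hfeq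
    have h2 : q j₁ = q j₂ := congrArg Sigma.snd hfeq
    have h1 : j₁ ∘ Equiv.swap p₀ (q j₁) = j₂ ∘ Equiv.swap p₀ (q j₂) :=
      congrArg Sigma.fst hfeq
    rw [← h2] at h1
    funext p
    have := congrFun h1 (Equiv.swap p₀ (q j₁) p)
    simpa [Function.comp, Equiv.swap_apply_self] using this
  have hbadle : bad.card ≤ T.card :=
    Finset.card_le_card_of_injOn f hmem hinj
  have hTcard : T.card = good.card * n i0 := by
    rw [hT, Finset.card_sigma]
    rw [Finset.sum_congr rfl (fun j' hj' => ?_), Finset.sum_const, smul_eq_mul]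
    rw [hgood, Finset.mem_filter] at hj'
    exact mem_Jset_iff.mp hj'.1 i0
  rw [hdeltaI, hdelta, hsplit, add_mul, one_mul, add_comm (n i0 * good.card)]
  refine Nat.add_le_add_left ?_ _
  rw [mul_comm]
  exact le_trans hbadle (le_of_eq hTcard)
end

section
/- Let p ∈ R[T] be square-free with deg p = δ ≥ 1, and q ∈ R[T]. The bilinear form S_q on R[T]/(p) defined by S_q(f,g) = Trace(M_{fqg}) has signature δ if and only if every complex root of p is real and q is strictly positive at every root of p. -/
open Finset Polynomial

/-! ### Auxiliary lemmas for Hermite's theorem -/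

section Aux

lemma hermite_trace_mk_sum {K : Type*} [Field K] (p : K[X]) (hm : p.Monic) (g : K[X]) :
    Algebra.trace K (AdjoinRoot p) (AdjoinRoot.mk p g) =
      ∑ i ∈ Finset.range p.natDegree, ((g * X ^ i) %ₘ p).coeff i := by
  classical
  rw [Algebra.trace_eq_matrix_trace (AdjoinRoot.powerBasis' hm).basis]
  unfold Matrix.trace
  rw [← Fin.sum_univ_eq_sum_range fun i => ((g * X ^ i) %ₘ p).coeff i]
  refine Finset.sum_congr rfl fun i _ => ?_
  rw [Matrix.diag_apply, Algebra.leftMulMatrix_apply, LinearMap.toMatrix_apply]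
  have hb : (AdjoinRoot.powerBasis' hm).basis i = AdjoinRoot.mk p (X ^ (i : ℕ)) := by
    rw [(AdjoinRoot.powerBasis' hm).basis_eq_pow]
    rw [AdjoinRoot.powerBasis'_gen, ← AdjoinRoot.mk_X, ← map_pow]
  rw [hb]
  show ((AdjoinRoot.powerBasis' hm).basis.repr
    (AdjoinRoot.mk p g * AdjoinRoot.mk p (X ^ (i:ℕ)))) i = _
  rw [← _root_.map_mul]
  show (AdjoinRoot.powerBasisAux' hm).repr (AdjoinRoot.mk p (g * X ^ (i:ℕ))) i = _
  exact (AdjoinRoot.powerBasisAux'_repr_apply_to_fun hm _ (i : Fin p.natDegree)).trans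
    (by rw [AdjoinRoot.modByMonicHom_mk])

lemma hermite_trace_baseChange_eq (p : ℝ[X]) (hm : p.Monic) (g : ℝ[X]) :
    algebraMap ℝ ℂ (Algebra.trace ℝ (AdjoinRoot p) (AdjoinRoot.mk p g)) =
      Algebra.trace ℂ (AdjoinRoot (p.map (algebraMap ℝ ℂ)))
        (AdjoinRoot.mk _ (g.map (algebraMap ℝ ℂ))) := by
  rw [hermite_trace_mk_sum p hm g, hermite_trace_mk_sum _ (hm.map (algebraMap ℝ ℂ)) _]
  rw [natDegree_map (algebraMap ℝ ℂ) (p := p), map_sum]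
  refine Finset.sum_congr rfl fun i _ => ?_
  rw [← coeff_map, map_modByMonic _ hm, Polynomial.map_mul, Polynomial.map_pow, map_X]

lemma hermite_hspan (P : ℂ[X]) (hm : P.Monic) (hsq : Squarefree P) :
    Ideal.span ({P} : Set ℂ[X]) =
      ⨅ z : ↥P.roots.toFinset, Ideal.span {X - C (z : ℂ)} := by
  have hnd : P.roots.Nodup := nodup_roots (PerfectField.separable_iff_squarefree.mpr hsq)
  have hinj : Function.Injective (fun z : ↥P.roots.toFinset => (z : ℂ)) := Subtype.val_injective
  rw [Ideal.iInf_span_singleton (fun i j hij =>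
    (Polynomial.pairwise_coprime_X_sub_C hinj hij))]
  congr 1
  congr 1
  rw [Finset.prod_coe_sort P.roots.toFinset (fun z => X - C z)]
  have : ∏ z ∈ P.roots.toFinset, (X - C z) = (P.roots.map fun z => X - C z).prod := by
    rw [Finset.prod, Multiset.toFinset_val, hnd.dedup]
  rw [this]
  exact (prod_multiset_X_sub_C_of_monic_of_roots_card_eq hm
    ((splits_iff_card_roots.mp (IsAlgClosed.splits P)))).symm

noncomputable def hermiteRootsRingEquiv (P : ℂ[X]) (hm : P.Monic) (hsq : Squarefree P) :
    AdjoinRoot P ≃+* (↥P.roots.toFinset → ℂ) :=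
  (Ideal.quotEquivOfEq (hermite_hspan P hm hsq)).trans
    ((Ideal.quotientInfRingEquivPiQuotient _ (fun _ _ hij =>
        (Ideal.isCoprime_span_singleton_iff _ _).mpr
          (Polynomial.pairwise_coprime_X_sub_C Subtype.val_injective hij))).trans
      (RingEquiv.piCongrRight fun z =>
        (Polynomial.quotientSpanXSubCAlgEquiv (z : ℂ)).toRingEquiv))

lemma hermiteRootsRingEquiv_mk (P : ℂ[X]) (hm : P.Monic) (hsq : Squarefree P) (h : ℂ[X]) :
    hermiteRootsRingEquiv P hm hsq (AdjoinRoot.mk P h) =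
      fun z : ↥P.roots.toFinset => h.eval (z : ℂ) := rfl

noncomputable def hermiteRootsEquiv (P : ℂ[X]) (hm : P.Monic) (hsq : Squarefree P) :
    AdjoinRoot P ≃ₐ[ℂ] (↥P.roots.toFinset → ℂ) :=
  AlgEquiv.ofRingEquiv (f := hermiteRootsRingEquiv P hm hsq) (fun x => by
    have h1 : (algebraMap ℂ (AdjoinRoot P)) x = AdjoinRoot.mk P (C x) := rfl
    rw [h1, hermiteRootsRingEquiv_mk]
    funext z
    simp [Pi.algebraMap_apply])

lemma hermite_trace_pi {ι : Type*} [Fintype ι] [DecidableEq ι] (v : ι → ℂ) :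
    Algebra.trace ℂ (ι → ℂ) v = ∑ i, v i := by
  rw [Algebra.trace_eq_matrix_trace (Pi.basisFun ℂ ι)]
  unfold Matrix.trace
  refine Finset.sum_congr rfl fun i _ => ?_
  simp [Matrix.diag, Algebra.leftMulMatrix_apply, LinearMap.toMatrix_apply, Pi.single_apply]

lemma hermite_trace_adjoinRoot_eq_sum_roots (P : ℂ[X]) (hm : P.Monic) (hsq : Squarefree P)
    (h : ℂ[X]) :
    Algebra.trace ℂ (AdjoinRoot P) (AdjoinRoot.mk P h) =
      ∑ z ∈ P.roots.toFinset, h.eval z := by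
  classical
  rw [← Algebra.trace_eq_of_algEquiv (hermiteRootsEquiv P hm hsq) (AdjoinRoot.mk P h)]
  have : (hermiteRootsEquiv P hm hsq) (AdjoinRoot.mk P h) =
      fun z : ↥P.roots.toFinset => h.eval (z : ℂ) := hermiteRootsRingEquiv_mk P hm hsq h
  rw [this, hermite_trace_pi]
  exact Finset.sum_coe_sort P.roots.toFinset (fun z => h.eval z)

lemma hermite_key_trace (p : ℝ[X]) (hsq : Squarefree p) (hd : 0 < p.natDegree) (g : ℝ[X]) :
    algebraMap ℝ ℂ (LinearMap.trace ℝ (ℝ[X] ⧸ Ideal.span {p})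
      (LinearMap.mulLeft ℝ (Ideal.Quotient.mk (Ideal.span {p}) g))) =
    ∑ z ∈ (p.map (algebraMap ℝ ℂ)).roots.toFinset, (g.map (algebraMap ℝ ℂ)).eval z := by
  have hp0 : p ≠ 0 := fun h => by simp [h] at hd
  set c : ℝ := p.leadingCoeff⁻¹ with hc
  have hc0 : c ≠ 0 := inv_ne_zero (leadingCoeff_ne_zero.mpr hp0)
  set p' : ℝ[X] := p * C c with hp'
  have hm : p'.Monic := monic_mul_leadingCoeff_inv hp0
  have hassoc : Associated p p' := ⟨(isUnit_C.mpr hc0.isUnit).unit, rfl⟩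
  have hsq' : Squarefree p' := hsq.squarefree_of_dvd hassoc.symm.dvd
  have hspan : Ideal.span ({p} : Set ℝ[X]) = Ideal.span {p'} :=
    Ideal.span_singleton_eq_span_singleton.mpr hassoc
  have h1 : LinearMap.trace ℝ (ℝ[X] ⧸ Ideal.span {p})
      (LinearMap.mulLeft ℝ (Ideal.Quotient.mk (Ideal.span {p}) g)) =
      Algebra.trace ℝ (AdjoinRoot p') (AdjoinRoot.mk p' g) := by
    have h2 : Algebra.trace ℝ (ℝ[X] ⧸ Ideal.span {p}) (Ideal.Quotient.mk (Ideal.span {p}) g) =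
        Algebra.trace ℝ (ℝ[X] ⧸ Ideal.span {p'}) (Ideal.Quotient.mk (Ideal.span {p'}) g) := by
      rw [← Algebra.trace_eq_of_algEquiv (Ideal.quotientEquivAlgOfEq ℝ hspan)
        (Ideal.Quotient.mk (Ideal.span {p}) g), Ideal.quotientEquivAlgOfEq_mk]
    exact h2
  rw [h1, hermite_trace_baseChange_eq p' hm g]
  have hmC : (p'.map (algebraMap ℝ ℂ)).Monic := hm.map _
  have hsqC : Squarefree (p'.map (algebraMap ℝ ℂ)) :=
    PerfectField.separable_iff_squarefree.mp
      ((PerfectField.separable_iff_squarefree.mpr hsq').map)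
  rw [hermite_trace_adjoinRoot_eq_sum_roots _ hmC hsqC]
  have hroots : (p'.map (algebraMap ℝ ℂ)).roots.toFinset
      = (p.map (algebraMap ℝ ℂ)).roots.toFinset := by
    rw [hp', Polynomial.map_mul, Polynomial.map_C, mul_comm, roots_C_mul]
    simpa using hc0
  rw [hroots]

lemma hermite_conj_eval (g : ℝ[X]) (z : ℂ) :
    (g.map (algebraMap ℝ ℂ)).eval ((starRingEnd ℂ) z) =
      (starRingEnd ℂ) ((g.map (algebraMap ℝ ℂ)).eval z) := by
  rw [eval_map, eval_map, Polynomial.hom_eval₂]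
  congr 1
  ext r
  simp [Complex.conj_ofReal]

lemma hermite_eval_map_ofReal (g : ℝ[X]) (t : ℝ) :
    (g.map (algebraMap ℝ ℂ)).eval ((t : ℝ) : ℂ) = algebraMap ℝ ℂ (g.eval t) := by
  rw [eval_map]; exact eval₂_at_apply (algebraMap ℝ ℂ) t

lemma hermite_prod_roots_eq (P : ℂ[X]) (hm : P.Monic) (hsq : Squarefree P) :
    ∏ z ∈ P.roots.toFinset, (X - C z) = P := by
  have hnd : P.roots.Nodup := nodup_roots (PerfectField.separable_iff_squarefree.mpr hsq)
  have : ∏ z ∈ P.roots.toFinset, (X - C z) = (P.roots.map fun z => X - C z).prod := by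
    rw [Finset.prod, Multiset.toFinset_val, hnd.dedup]
  rw [this]
  exact prod_multiset_X_sub_C_of_monic_of_roots_card_eq hm
    (splits_iff_card_roots.mp (IsAlgClosed.splits P))

lemma hermite_dvd_of_roots_vanish (p F : ℝ[X]) (hsq : Squarefree p) (hd : 0 < p.natDegree)
    (h : ∀ z ∈ (p.map (algebraMap ℝ ℂ)).roots.toFinset, (F.map (algebraMap ℝ ℂ)).eval z = 0) :
    p ∣ F := by
  have hp0 : p ≠ 0 := fun hh => by simp [hh] at hd
  set c : ℝ := p.leadingCoeff⁻¹ with hc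
  have hc0 : c ≠ 0 := inv_ne_zero (leadingCoeff_ne_zero.mpr hp0)
  set p' : ℝ[X] := p * C c with hp'
  have hm : p'.Monic := monic_mul_leadingCoeff_inv hp0
  have hassoc : Associated p p' := ⟨(isUnit_C.mpr hc0.isUnit).unit, rfl⟩
  have hsq' : Squarefree p' := hsq.squarefree_of_dvd hassoc.symm.dvd
  have hmC : (p'.map (algebraMap ℝ ℂ)).Monic := hm.map _
  have hsqC : Squarefree (p'.map (algebraMap ℝ ℂ)) :=
    PerfectField.separable_iff_squarefree.mp
      ((PerfectField.separable_iff_squarefree.mpr hsq').map)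
  have hroots : (p'.map (algebraMap ℝ ℂ)).roots.toFinset
      = (p.map (algebraMap ℝ ℂ)).roots.toFinset := by
    rw [hp', Polynomial.map_mul, Polynomial.map_C, mul_comm, roots_C_mul]
    simpa using hc0
  suffices hdd : p' ∣ F by
    exact hassoc.dvd.trans hdd
  rw [← map_dvd_map (algebraMap ℝ ℂ) (algebraMap ℝ ℂ).injective hm]
  rw [← hermite_prod_roots_eq _ hmC hsqC, hroots]
  refine Finset.prod_dvd_of_coprime ?_ ?_
  · intro i _ j _ hij
    exact Polynomial.pairwise_coprime_X_sub_C Function.injective_id hij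
  · intro z hz
    exact dvd_iff_isRoot.mpr (h z hz)

lemma hermite_case1 (p q : ℝ[X]) (hd : 0 < p.natDegree) (t : ℝ) (hroot : p.eval t = 0)
    (hq : q.eval t ≤ 0) :
    ∃ (F : ℝ[X]) (s : ℝ), ¬ p ∣ F ∧ s ≤ 0 ∧
      ∑ z ∈ (p.map (algebraMap ℝ ℂ)).roots.toFinset,
        ((F * q * F).map (algebraMap ℝ ℂ)).eval z = algebraMap ℝ ℂ s := by
  classical
  have hp0 : p ≠ 0 := fun hh => by simp [hh] at hd
  set F : ℝ[X] := p /ₘ (X - C t) with hF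
  have hFp : (X - C t) * F = p := mul_divByMonic_eq_iff_isRoot.mpr hroot
  have hF0 : F ≠ 0 := fun hh => hp0 (by rw [← hFp, hh, mul_zero])
  have hdegF : F.natDegree < p.natDegree := by
    have h2 := natDegree_divByMonic p (monic_X_sub_C t)
    rw [← hF, natDegree_X_sub_C] at h2
    omega
  have hndvd : ¬ p ∣ F := fun hdvd =>
    absurd (natDegree_le_of_dvd hdvd hF0) (by omega)
  refine ⟨F, q.eval t * F.eval t ^ 2, hndvd, ?_, ?_⟩
  · exact mul_nonpos_of_nonpos_of_nonneg hq (sq_nonneg _)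
  · have htS : ((t : ℝ) : ℂ) ∈ (p.map (algebraMap ℝ ℂ)).roots.toFinset := by
      rw [Multiset.mem_toFinset, mem_roots (map_ne_zero hp0)]
      rw [IsRoot, hermite_eval_map_ofReal, hroot, map_zero]
    rw [Finset.sum_eq_single_of_mem _ htS]
    · rw [hermite_eval_map_ofReal]
      congr 1
      simp only [eval_mul]
      ring
    · intro z hz hne
      have hPz : (p.map (algebraMap ℝ ℂ)).eval z = 0 := by
        rw [Multiset.mem_toFinset, mem_roots (map_ne_zero hp0)] at hz
        exact hz
      have hFz : (F.map (algebraMap ℝ ℂ)).eval z = 0 := by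
        have : (z - (t:ℂ)) * (F.map (algebraMap ℝ ℂ)).eval z = 0 := by
          rw [← hFp] at hPz
          simpa [Polynomial.map_mul] using hPz
        rcases mul_eq_zero.mp this with h | h
        · exact absurd (sub_eq_zero.mp h) hne
        · exact h
      simp [Polynomial.map_mul, hFz]

lemma hermite_case2 (p q : ℝ[X]) (hsq : Squarefree p) (hd : 0 < p.natDegree) (z₀ : ℂ)
    (hroot : (p.map (algebraMap ℝ ℂ)).eval z₀ = 0) (him : z₀.im ≠ 0) :
    ∃ (F : ℝ[X]) (s : ℝ), ¬ p ∣ F ∧ s ≤ 0 ∧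
      ∑ z ∈ (p.map (algebraMap ℝ ℂ)).roots.toFinset,
        ((F * q * F).map (algebraMap ℝ ℂ)).eval z = algebraMap ℝ ℂ s := by
  classical
  have hp0 : p ≠ 0 := fun hh => by simp [hh] at hd
  have hP0 : p.map (algebraMap ℝ ℂ) ≠ 0 := map_ne_zero hp0
  set z₁ : ℂ := (starRingEnd ℂ) z₀ with hz₁
  have hz01 : z₀ ≠ z₁ := by
    intro h
    have : z₀.im = -z₀.im := by
      conv_lhs => rw [h]
      simp [hz₁]
    exact him (by linarith)
  set D : ℝ[X] := X ^ 2 + (C (-(2 * z₀.re)) * X + C (z₀.re ^ 2 + z₀.im ^ 2)) with hDdef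
  have hDm : D.Monic := monic_X_pow_add (lt_of_le_of_lt degree_linear_le (by norm_num))
  have h1 : ((2 * z₀.re : ℝ) : ℂ) = z₀ + z₁ := by rw [hz₁, Complex.add_conj]
  have h2 : ((z₀.re ^ 2 + z₀.im ^ 2 : ℝ) : ℂ) = z₀ * z₁ := by
    rw [hz₁, Complex.mul_conj]
    push_cast [Complex.normSq_apply]
    ring
  have hD : D.map (algebraMap ℝ ℂ) = (X - C z₀) * (X - C z₁) := by
    have hmap : D.map (algebraMap ℝ ℂ) = X ^ 2 +
        (C ((-(2 * z₀.re) : ℝ) : ℂ) * X + C ((z₀.re ^ 2 + z₀.im ^ 2 : ℝ) : ℂ)) := by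
      simp [hDdef, Polynomial.map_add, Polynomial.map_mul, Polynomial.map_pow]
    rw [hmap]
    have h1' : ((-(2 * z₀.re) : ℝ) : ℂ) = -(z₀ + z₁) := by
      rw [← h1]; push_cast; ring
    rw [h1', h2, map_neg, map_add, _root_.map_mul]
    ring
  have hroot1 : (p.map (algebraMap ℝ ℂ)).eval z₁ = 0 := by
    rw [hz₁, hermite_conj_eval, hroot, map_zero]
  have hcop : IsCoprime (X - C z₀) (X - C z₁) :=
    isCoprime_X_sub_C_of_isUnit_sub (sub_ne_zero.mpr hz01).isUnit
  have hDdvd : D.map (algebraMap ℝ ℂ) ∣ p.map (algebraMap ℝ ℂ) := by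
    rw [hD]
    exact hcop.mul_dvd (dvd_iff_isRoot.mpr hroot) (dvd_iff_isRoot.mpr hroot1)
  have hDp : D ∣ p := (map_dvd_map (algebraMap ℝ ℂ) (algebraMap ℝ ℂ).injective hDm).mp hDdvd
  obtain ⟨G, hG⟩ := hDp
  have hsqC : Squarefree (p.map (algebraMap ℝ ℂ)) :=
    PerfectField.separable_iff_squarefree.mp
      ((PerfectField.separable_iff_squarefree.mpr hsq).map)
  have hGz₀ : (G.map (algebraMap ℝ ℂ)).eval z₀ ≠ 0 := by
    intro h0
    have hdd : (X - C z₀) * (X - C z₀) ∣ p.map (algebraMap ℝ ℂ) := by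
      rw [hG, Polynomial.map_mul]
      exact mul_dvd_mul (hD ▸ dvd_mul_right _ _) (dvd_iff_isRoot.mpr h0)
    exact not_isUnit_X_sub_C z₀ (hsqC _ hdd)
  set w : ℂ := (q.map (algebraMap ℝ ℂ)).eval z₀ * ((G.map (algebraMap ℝ ℂ)).eval z₀) ^ 2 with hw
  set u : ℂ := if w = 0 then 1 else -((starRingEnd ℂ) w) with hu
  have hu0 : u ≠ 0 := by
    rw [hu]
    split_ifs with hw0
    · exact one_ne_zero
    · simpa using hw0
  obtain ⟨c, hc⟩ := IsAlgClosed.exists_pow_nat_eq u (n := 2) (by norm_num)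
  have hc0 : c ≠ 0 := by
    intro h
    rw [h] at hc
    exact hu0 (by simpa using hc.symm)
  set b' : ℝ := c.im / z₀.im with hb'
  set a' : ℝ := c.re - b' * z₀.re with ha'
  set L : ℝ[X] := C a' + C b' * X with hL
  have hLz₀ : (L.map (algebraMap ℝ ℂ)).eval z₀ = c := by
    simp only [hL, Polynomial.map_add, Polynomial.map_mul, Polynomial.map_C, map_X,
      eval_add, eval_mul, eval_C, eval_X, Complex.coe_algebraMap]
    apply Complex.ext
    · simp only [Complex.add_re, Complex.mul_re, Complex.ofReal_re, Complex.ofReal_im, ha']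
      ring
    · simp only [Complex.add_im, Complex.mul_im, Complex.ofReal_re, Complex.ofReal_im, hb']
      field_simp
      ring
  set F : ℝ[X] := G * L with hF
  have hFz₀ : (F.map (algebraMap ℝ ℂ)).eval z₀ = (G.map (algebraMap ℝ ℂ)).eval z₀ * c := by
    rw [hF, Polynomial.map_mul, eval_mul, hLz₀]
  have hndvd : ¬ p ∣ F := by
    intro hdvd
    obtain ⟨h, hh⟩ := hdvd
    have : (F.map (algebraMap ℝ ℂ)).eval z₀ = 0 := by
      rw [hh, Polynomial.map_mul, eval_mul, hroot, zero_mul]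
    rw [hFz₀] at this
    exact mul_ne_zero hGz₀ hc0 this
  refine ⟨F, if w = 0 then 0 else -2 * Complex.normSq w, hndvd, ?_, ?_⟩
  · split_ifs
    · norm_num
    · nlinarith [Complex.normSq_nonneg w]
  · have hz₀S : z₀ ∈ (p.map (algebraMap ℝ ℂ)).roots.toFinset := by
      rw [Multiset.mem_toFinset, mem_roots hP0]; exact hroot
    have hz₁S : z₁ ∈ (p.map (algebraMap ℝ ℂ)).roots.toFinset := by
      rw [Multiset.mem_toFinset, mem_roots hP0]; exact hroot1
    have hpair : ({z₀, z₁} : Finset ℂ) ⊆ (p.map (algebraMap ℝ ℂ)).roots.toFinset := by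
      intro z hz
      rcases Finset.mem_insert.mp hz with h | h
      · rwa [h]
      · rw [Finset.mem_singleton.mp h]; exact hz₁S
    have hvanish : ∀ z ∈ (p.map (algebraMap ℝ ℂ)).roots.toFinset,
        z ∉ ({z₀, z₁} : Finset ℂ) → ((F * q * F).map (algebraMap ℝ ℂ)).eval z = 0 := by
      intro z hz hnz
      have hPz : (p.map (algebraMap ℝ ℂ)).eval z = 0 := by
        rw [Multiset.mem_toFinset, mem_roots hP0] at hz; exact hz
      have hDz : (D.map (algebraMap ℝ ℂ)).eval z ≠ 0 := by
        rw [hD, eval_mul, eval_sub, eval_sub, eval_X, eval_C, eval_C]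
        refine mul_ne_zero (sub_ne_zero.mpr ?_) (sub_ne_zero.mpr ?_)
        · exact fun h => hnz (by rw [h]; exact Finset.mem_insert_self _ _)
        · exact fun h => hnz
            (by rw [h]; exact Finset.mem_insert_of_mem (Finset.mem_singleton_self _))
      have hGz : (G.map (algebraMap ℝ ℂ)).eval z = 0 := by
        have : (D.map (algebraMap ℝ ℂ)).eval z * (G.map (algebraMap ℝ ℂ)).eval z = 0 := by
          rw [← eval_mul, ← Polynomial.map_mul, ← hG]; exact hPz
        rcases mul_eq_zero.mp this with h | h
        · exact absurd h hDz
        · exact h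
      simp [hF, Polynomial.map_mul, hGz]
    rw [← Finset.sum_subset hpair (fun z hz hnz => hvanish z hz hnz), Finset.sum_pair hz01]
    have ht0 : ((F * q * F).map (algebraMap ℝ ℂ)).eval z₀ = w * c ^ 2 := by
      simp only [Polynomial.map_mul, eval_mul, hFz₀, hw]
      ring
    have ht1 : ((F * q * F).map (algebraMap ℝ ℂ)).eval z₁ =
        (starRingEnd ℂ) (w * c ^ 2) := by
      rw [hz₁, hermite_conj_eval, ht0]
    rw [ht0, ht1, hc]
    by_cases hw0 : w = 0
    · simp [hw0, hu]
    · have hval : w * u = -((Complex.normSq w : ℝ) : ℂ) := by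
        rw [hu, if_neg hw0, mul_neg, Complex.mul_conj]
      rw [if_neg hw0, hval, map_neg, Complex.conj_ofReal]
      have : algebraMap ℝ ℂ (-2 * Complex.normSq w) = ((-2 * Complex.normSq w : ℝ) : ℂ) := rfl
      rw [this]
      push_cast
      ring

lemma hermite_posdef_iff_eig {n : ℕ} {A : Matrix (Fin n) (Fin n) ℝ} (hA : A.IsHermitian) :
    A.PosDef ↔ ∀ i, 0 < hA.eigenvalues i := by
  constructor
  · intro h i; exact h.eigenvalues_pos i
  · intro h
    refine Matrix.PosDef.of_dotProduct_mulVec_pos hA fun x hx => ?_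
    have hsd := hA.posSemidef_iff_eigenvalues_nonneg.mpr (fun i => (h i).le)
    have h1 : (0:ℝ) ≤ dotProduct (star x) (A.mulVec x) := by simpa using hsd.dotProduct_mulVec_nonneg x
    rcases h1.lt_or_eq with h2 | h2
    · exact h2
    · exfalso
      have h3 : A.mulVec x = 0 := (hsd.dotProduct_mulVec_zero_iff x).mp h2.symm
      have hdet : A.det ≠ 0 := by
        rw [hA.det_eq_prod_eigenvalues]
        exact ne_of_gt (Finset.prod_pos fun i _ => h i)
      exact hx (Matrix.eq_zero_of_mulVec_eq_zero hdet h3)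

lemma hermite_count_iff_eig {n : ℕ} (ev : Fin n → ℝ) :
    (((Finset.univ.filter fun i => 0 < ev i).card : ℤ) -
        ((Finset.univ.filter fun i => ev i < 0).card : ℤ) = n)
    ↔ ∀ i, 0 < ev i := by
  classical
  constructor
  · intro h i
    have hP : (Finset.univ.filter fun i => 0 < ev i).card ≤ n := by
      have := Finset.card_filter_le (Finset.univ : Finset (Fin n)) (fun i => 0 < ev i)
      simpa using this
    have hPc : (Finset.univ.filter fun i => 0 < ev i).card = n := by omega
    have huniv : (Finset.univ.filter fun i => 0 < ev i) = Finset.univ :=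
      Finset.eq_univ_of_card _ (by simpa using hPc)
    have := Finset.eq_univ_iff_forall.mp huniv i
    simpa using this
  · intro h
    have h1 : (Finset.univ.filter fun i => 0 < ev i) = Finset.univ :=
      Finset.filter_true_of_mem fun i _ => h i
    have h2 : (Finset.univ.filter fun i => ev i < 0) = ∅ :=
      Finset.filter_false_of_mem fun i _ => not_lt.mpr (h i).le
    simp [h1, h2]

end Aux

/-- The Gram matrix of the Hermite bilinear form `S_q(f,g) = Trace(M_{fqg})` on
`ℝ[T]/(p)` in a basis `b`. -/
noncomputable def hermiteGram (p q : Polynomial ℝ)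
    (b : Module.Basis (Fin p.natDegree) ℝ (Polynomial ℝ ⧸ Ideal.span {p})) :
    Matrix (Fin p.natDegree) (Fin p.natDegree) ℝ :=
  fun i j =>
    LinearMap.trace ℝ (Polynomial ℝ ⧸ Ideal.span {p})
      (LinearMap.mulLeft ℝ (b i * Ideal.Quotient.mk (Ideal.span {p}) q * b j))

section Bridge

open Matrix

variable (p q : ℝ[X])

noncomputable abbrev hermiteTr : (Polynomial ℝ ⧸ Ideal.span {p}) →ₗ[ℝ] ℝ :=
  (LinearMap.trace ℝ (Polynomial ℝ ⧸ Ideal.span {p})).comp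
    (LinearMap.mul ℝ (Polynomial ℝ ⧸ Ideal.span {p}))

lemma hermite_dot_eq (b : Module.Basis (Fin p.natDegree) ℝ (Polynomial ℝ ⧸ Ideal.span {p}))
    (x : Fin p.natDegree → ℝ) :
    dotProduct x ((hermiteGram p q b).mulVec x) =
      hermiteTr p (b.equivFun.symm x * Ideal.Quotient.mk (Ideal.span {p}) q *
        b.equivFun.symm x) := by
  rw [Module.Basis.equivFun_symm_apply]
  have expand : (∑ i, x i • b i) * Ideal.Quotient.mk (Ideal.span {p}) q * (∑ j, x j • b j)
      = ∑ i, ∑ j, (x i * x j) • (b i * Ideal.Quotient.mk (Ideal.span {p}) q * b j) := by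
    rw [Finset.sum_mul, Finset.sum_mul]
    refine Finset.sum_congr rfl fun i _ => ?_
    rw [Finset.mul_sum]
    refine Finset.sum_congr rfl fun j _ => ?_
    rw [smul_mul_assoc, smul_mul_assoc, mul_smul_comm, smul_smul]
  rw [expand, map_sum]
  simp only [map_sum, _root_.map_smul, smul_eq_mul]
  simp only [dotProduct, Matrix.mulVec, hermiteGram, Finset.mul_sum]
  refine Finset.sum_congr rfl fun i _ => Finset.sum_congr rfl fun j _ => ?_
  have hTr : hermiteTr p (b i * Ideal.Quotient.mk (Ideal.span {p}) q * b j) =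
      LinearMap.trace ℝ (Polynomial ℝ ⧸ Ideal.span {p})
        (LinearMap.mulLeft ℝ (b i * Ideal.Quotient.mk (Ideal.span {p}) q * b j)) := rfl
  rw [hTr]; ring

end Bridge

/-- The Hermite form `S_q` has signature `δ = deg p` iff every complex root of `p` is
real and `q` is strictly positive at every real root of `p`. -/
theorem stmt10 (p q : Polynomial ℝ) (hp : Squarefree p) (hdeg : 0 < p.natDegree)
    (b : Module.Basis (Fin p.natDegree) ℝ (Polynomial ℝ ⧸ Ideal.span {p}))
    (hG : (hermiteGram p q b).IsHermitian) :
    (((Finset.univ.filter fun i => 0 < hG.eigenvalues i).card : ℤ) -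
        ((Finset.univ.filter fun i => hG.eigenvalues i < 0).card : ℤ) = p.natDegree)
    ↔ ((∀ z : ℂ, (p.map (algebraMap ℝ ℂ)).eval z = 0 → z.im = 0) ∧
        ∀ t : ℝ, p.eval t = 0 → 0 < q.eval t) := by
  classical
  have hp0 : p ≠ 0 := fun h => by simp [h] at hdeg
  -- the key trace formula, in terms of `hermiteTr`
  have key : ∀ g : ℝ[X], algebraMap ℝ ℂ (hermiteTr p (Ideal.Quotient.mk (Ideal.span {p}) g)) =
      ∑ z ∈ (p.map (algebraMap ℝ ℂ)).roots.toFinset, (g.map (algebraMap ℝ ℂ)).eval z := by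
    intro g
    have h0 : hermiteTr p (Ideal.Quotient.mk (Ideal.span {p}) g) =
        LinearMap.trace ℝ (ℝ[X] ⧸ Ideal.span {p})
          (LinearMap.mulLeft ℝ (Ideal.Quotient.mk (Ideal.span {p}) g)) := rfl
    rw [h0, hermite_key_trace p hp hdeg g]
  -- step : positivity of the form
  have step2 : (hermiteGram p q b).PosDef ↔
      (∀ f : Polynomial ℝ ⧸ Ideal.span {p}, f ≠ 0 →
        0 < hermiteTr p (f * Ideal.Quotient.mk (Ideal.span {p}) q * f)) := by
    constructor
    · intro hPD f hf
      have hx : b.equivFun f ≠ 0 := by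
        intro h
        apply hf
        have h2 := congrArg b.equivFun.symm h
        rw [LinearEquiv.symm_apply_apply, map_zero] at h2
        exact h2
      have h1 := hPD.dotProduct_mulVec_pos hx
      rw [show star (b.equivFun f) = b.equivFun f from star_trivial _] at h1
      rw [hermite_dot_eq p q b (b.equivFun f), LinearEquiv.symm_apply_apply] at h1
      exact h1
    · intro hPF
      refine Matrix.PosDef.of_dotProduct_mulVec_pos hG fun x hx => ?_
      rw [show star x = x from star_trivial _, hermite_dot_eq p q b x]
      apply hPF
      intro h
      apply hx
      have h2 := congrArg b.equivFun h
      rw [LinearEquiv.apply_symm_apply, map_zero] at h2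
      exact h2
  have step1 : (((Finset.univ.filter fun i => 0 < hG.eigenvalues i).card : ℤ) -
        ((Finset.univ.filter fun i => hG.eigenvalues i < 0).card : ℤ) = p.natDegree)
      ↔ (hermiteGram p q b).PosDef :=
    (hermite_count_iff_eig hG.eigenvalues).trans (hermite_posdef_iff_eig hG).symm
  rw [step1, step2]
  -- now the main equivalence
  constructor
  · intro hPF
    constructor
    · -- all roots are real
      intro z hz
      by_contra him
      obtain ⟨F, s, hndvd, hs, hsum⟩ := hermite_case2 p q hp hdeg z hz him
      have hf : Ideal.Quotient.mk (Ideal.span {p}) F ≠ 0 := by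
        rw [Ne, Ideal.Quotient.eq_zero_iff_mem, Ideal.mem_span_singleton]
        exact hndvd
      have hlt := hPF _ hf
      have hmu : (Ideal.Quotient.mk (Ideal.span {p}) F) *
          Ideal.Quotient.mk (Ideal.span {p}) q * Ideal.Quotient.mk (Ideal.span {p}) F =
          Ideal.Quotient.mk (Ideal.span {p}) (F * q * F) := by
        rw [map_mul, map_mul]
      rw [hmu] at hlt
      have heq : algebraMap ℝ ℂ (hermiteTr p (Ideal.Quotient.mk (Ideal.span {p}) (F * q * F)))
          = algebraMap ℝ ℂ s := by rw [key, hsum]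
      have : hermiteTr p (Ideal.Quotient.mk (Ideal.span {p}) (F * q * F)) = s :=
        (algebraMap ℝ ℂ).injective heq
      rw [this] at hlt
      linarith
    · -- q positive at real roots
      intro t ht
      by_contra hq'
      push_neg at hq'
      obtain ⟨F, s, hndvd, hs, hsum⟩ := hermite_case1 p q hdeg t ht hq'
      have hf : Ideal.Quotient.mk (Ideal.span {p}) F ≠ 0 := by
        rw [Ne, Ideal.Quotient.eq_zero_iff_mem, Ideal.mem_span_singleton]
        exact hndvd
      have hlt := hPF _ hf
      have hmu : (Ideal.Quotient.mk (Ideal.span {p}) F) *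
          Ideal.Quotient.mk (Ideal.span {p}) q * Ideal.Quotient.mk (Ideal.span {p}) F =
          Ideal.Quotient.mk (Ideal.span {p}) (F * q * F) := by
        rw [map_mul, map_mul]
      rw [hmu] at hlt
      have heq : algebraMap ℝ ℂ (hermiteTr p (Ideal.Quotient.mk (Ideal.span {p}) (F * q * F)))
          = algebraMap ℝ ℂ s := by rw [key, hsum]
      have : hermiteTr p (Ideal.Quotient.mk (Ideal.span {p}) (F * q * F)) = s :=
        (algebraMap ℝ ℂ).injective heq
      rw [this] at hlt
      linarith
  · rintro ⟨hreal, hqpos⟩ f hf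
    obtain ⟨F, rfl⟩ := Ideal.Quotient.mk_surjective f
    have hndvd : ¬ p ∣ F := by
      intro hdvd
      apply hf
      rw [Ideal.Quotient.eq_zero_iff_mem, Ideal.mem_span_singleton]
      exact hdvd
    have hmu : (Ideal.Quotient.mk (Ideal.span {p}) F) *
        Ideal.Quotient.mk (Ideal.span {p}) q * Ideal.Quotient.mk (Ideal.span {p}) F =
        Ideal.Quotient.mk (Ideal.span {p}) (F * q * F) := by
      rw [map_mul, map_mul]
    rw [hmu]
    set r : ℝ := hermiteTr p (Ideal.Quotient.mk (Ideal.span {p}) (F * q * F)) with hr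
    -- real roots of p
    have hroot_of_mem : ∀ z ∈ (p.map (algebraMap ℝ ℂ)).roots.toFinset, p.eval z.re = 0 ∧
        z = ((z.re : ℝ) : ℂ) := by
      intro z hz
      have hPz : (p.map (algebraMap ℝ ℂ)).eval z = 0 := by
        rw [Multiset.mem_toFinset, mem_roots (map_ne_zero hp0)] at hz
        exact hz
      have him : z.im = 0 := hreal z hPz
      have hzre : z = ((z.re : ℝ) : ℂ) := by
        apply Complex.ext <;> simp [him]
      rw [hzre, hermite_eval_map_ofReal] at hPz
      exact ⟨(algebraMap ℝ ℂ).injective (by simpa using hPz), hzre⟩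
    have hsum2 : algebraMap ℝ ℂ r = algebraMap ℝ ℂ
        (∑ z ∈ (p.map (algebraMap ℝ ℂ)).roots.toFinset, (F * q * F).eval z.re) := by
      rw [hr, key, map_sum]
      refine Finset.sum_congr rfl fun z hz => ?_
      obtain ⟨_, hzre⟩ := hroot_of_mem z hz
      conv_lhs => rw [hzre]
      rw [hermite_eval_map_ofReal]
    have hreq : r = ∑ z ∈ (p.map (algebraMap ℝ ℂ)).roots.toFinset, (F * q * F).eval z.re :=
      (algebraMap ℝ ℂ).injective hsum2
    have hterm_nonneg : ∀ z ∈ (p.map (algebraMap ℝ ℂ)).roots.toFinset,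
        0 ≤ (F * q * F).eval z.re := by
      intro z hz
      obtain ⟨hroot, _⟩ := hroot_of_mem z hz
      have hq := hqpos z.re hroot
      simp only [eval_mul]
      nlinarith [sq_nonneg (F.eval z.re)]
    have hrnn : 0 ≤ r := hreq ▸ Finset.sum_nonneg hterm_nonneg
    rcases hrnn.lt_or_eq with h | h
    · exact h
    · exfalso
      have hzero := (Finset.sum_eq_zero_iff_of_nonneg hterm_nonneg).mp (hreq ▸ h.symm)
      apply hndvd
      apply hermite_dvd_of_roots_vanish p F hp hdeg
      intro z hz
      obtain ⟨hroot, hzre⟩ := hroot_of_mem z hz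
      have hq := hqpos z.re hroot
      have h1 := hzero z hz
      have hFz : F.eval z.re = 0 := by
        simp only [eval_mul] at h1
        rcases mul_eq_zero.mp h1 with h3 | h3
        · rcases mul_eq_zero.mp h3 with h4 | h4
          · exact h4
          · exact absurd h4 (ne_of_gt hq)
        · exact h3
      rw [hzre, hermite_eval_map_ofReal, hFz, map_zero]
end
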